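/- Let x_{n,k} = 2^{-2^n} + k·4^{-2^n}, X = {0} ∪ ⋃_{n=1}^∞ ⋃_{k=0}^{n-1} {x_{n,k}} ⊂ ℝ, and let μ = Σ_{n=1}^∞ Σ_{k=0}^{n-1} (2^{-n}/n) δ_{x_{n,k}}, where δ_y denotes the point mass at y. Then μ is a finite Borel measure fully supported on X, and the pointwise Assouad dimension satisfies dim_A(μ,x) = 0 for every x ∈ X. -/

import Mathlib

open MeasureTheory Metric Set
open scoped NNReal ENNReal

/-- The pointwise Assouad dimension of a measure `μ` at a point `x`. -/
noncomputable def pwAssouadDim {X : Type*} [PseudoMetricSpace X] [MeasurableSpace X]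
    (μ : Measure X) (x : X) : ℝ≥0∞ :=
  sInf (ENNReal.ofReal '' {s : ℝ | 0 < s ∧ ∃ C : ℝ, 0 < C ∧ ∀ r R : ℝ, 0 < r → r < R →
    μ (closedBall x R) ≤ ENNReal.ofReal (C * (R / r) ^ s) * μ (closedBall x r)})

/-- The points `x_{n,k} = 2^{-2^n} + k·4^{-2^n}`. -/
noncomputable def xnk (n k : ℕ) : ℝ := (2 : ℝ)⁻¹ ^ (2 ^ n) + k * (4 : ℝ)⁻¹ ^ (2 ^ n)

/-- The set `X = {0} ∪ ⋃_{n=1}^∞ ⋃_{k=0}^{n-1} {x_{n,k}}`. -/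
def XLR : Set ℝ := {0} ∪ {y : ℝ | ∃ n : ℕ, 1 ≤ n ∧ ∃ k : ℕ, k < n ∧ y = xnk n k}

/-- The measure `μ = Σ_{n=1}^∞ Σ_{k=0}^{n-1} (2^{-n}/n) δ_{x_{n,k}}`. -/
noncomputable def muLR : Measure ℝ :=
  Measure.sum fun n : ℕ =>
    ∑ k ∈ Finset.range n, (((2 : ℝ≥0∞)⁻¹ ^ n) / (n : ℝ≥0∞)) • Measure.dirac (xnk n k)

lemma muLR_apply {s : Set ℝ} (hs : MeasurableSet s) :
    muLR s = ∑' n : ℕ, ∑ k ∈ Finset.range n,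
      (((2 : ℝ≥0∞)⁻¹ ^ n) / n) * s.indicator 1 (xnk n k) := by
  rw [muLR, Measure.sum_apply _ hs]
  refine tsum_congr fun n => ?_
  rw [Measure.finset_sum_apply]
  exact Finset.sum_congr rfl fun k _ => by
    simp [Measure.dirac_apply' _ hs]

lemma xnk_pos (n k : ℕ) : 0 < xnk n k := by
  have : (0:ℝ) < (2 : ℝ)⁻¹ ^ (2 ^ n) := by positivity
  have : (0:ℝ) ≤ k * (4 : ℝ)⁻¹ ^ (2 ^ n) := by positivity
  unfold xnk; linarith

lemma xnk_lower (n k : ℕ) : (2 : ℝ)⁻¹ ^ (2 ^ n) ≤ xnk n k := by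
  have : (0:ℝ) ≤ k * (4 : ℝ)⁻¹ ^ (2 ^ n) := by positivity
  unfold xnk; linarith

lemma xnk_upper {n k : ℕ} (hk : k ≤ n) : xnk n k ≤ 2 * (2 : ℝ)⁻¹ ^ (2 ^ n) := by
  have h4 : (4 : ℝ)⁻¹ ^ (2 ^ n) = ((2 : ℝ)⁻¹ ^ (2 ^ n))^2 := by
    rw [show (4:ℝ)⁻¹ = (2:ℝ)⁻¹ ^ 2 by norm_num, ← pow_mul, ← pow_mul, mul_comm]
  have hn2 : (n : ℝ) ≤ 2 ^ (2^n) := by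
    calc (n:ℝ) ≤ 2^n := by exact_mod_cast (Nat.lt_two_pow_self (n := n)).le
    _ ≤ 2^(2^n) := by
        have := Nat.lt_two_pow_self (n := n)
        exact_mod_cast Nat.pow_le_pow_right (by norm_num) (Nat.lt_two_pow_self (n := n)).le
  have hinv : (2 : ℝ)⁻¹ ^ (2 ^ n) = ((2:ℝ) ^ (2^n))⁻¹ := by rw [inv_pow]
  have hpos : (0:ℝ) < (2:ℝ) ^ (2^n) := by positivity
  have : (k:ℝ) * (4 : ℝ)⁻¹ ^ (2 ^ n) ≤ (2 : ℝ)⁻¹ ^ (2 ^ n) := by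
    rw [h4, sq]
    have hk' : (k:ℝ) ≤ 2 ^ (2^n) := le_trans (by exact_mod_cast hk) hn2
    calc (k:ℝ) * ((2:ℝ)⁻¹ ^ (2^n) * (2:ℝ)⁻¹ ^ (2^n))
        ≤ 2 ^ (2^n) * ((2:ℝ)⁻¹ ^ (2^n) * (2:ℝ)⁻¹ ^ (2^n)) := by
          apply mul_le_mul_of_nonneg_right hk'; positivity
      _ = (2 : ℝ)⁻¹ ^ (2 ^ n) := by rw [hinv]; field_simp
  unfold xnk; linarith

lemma term_le (n : ℕ) {s : Set ℝ} :
    ∑ k ∈ Finset.range n, (((2 : ℝ≥0∞)⁻¹ ^ n) / n) * s.indicator 1 (xnk n k)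
      ≤ (2 : ℝ≥0∞)⁻¹ ^ n := by
  calc ∑ k ∈ Finset.range n, (((2 : ℝ≥0∞)⁻¹ ^ n) / n) * s.indicator 1 (xnk n k)
      ≤ ∑ k ∈ Finset.range n, (((2 : ℝ≥0∞)⁻¹ ^ n) / n) * 1 := by
        refine Finset.sum_le_sum fun k _ => ?_
        gcongr
        exact Set.indicator_apply_le fun _ => le_rfl
    _ = n * (((2 : ℝ≥0∞)⁻¹ ^ n) / n) := by simp [Finset.sum_const, mul_comm]
    _ ≤ (2 : ℝ≥0∞)⁻¹ ^ n := by
        rcases Nat.eq_zero_or_pos n with h | h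
        · simp [h]
        · rw [mul_comm, ENNReal.div_mul_cancel (by exact_mod_cast h.ne' : (n:ℝ≥0∞) ≠ 0) (by simp)]

lemma muLR_le_two {s : Set ℝ} (hs : MeasurableSet s) : muLR s ≤ 2 := by
  rw [muLR_apply hs]
  calc _ ≤ ∑' n : ℕ, (2 : ℝ≥0∞)⁻¹ ^ n := ENNReal.tsum_le_tsum fun n => term_le n
    _ = 2 := by rw [ENNReal.tsum_geometric, ENNReal.one_sub_inv_two]; simp

lemma lemA {n : ℕ} (hn : 1 ≤ n) {r : ℝ} (hr : 2 * (2 : ℝ)⁻¹ ^ (2 ^ n) ≤ r) :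
    (2 : ℝ≥0∞)⁻¹ ^ n ≤ muLR (closedBall 0 r) := by
  rw [muLR_apply measurableSet_closedBall]
  have key : ∑ k ∈ Finset.range n, (((2 : ℝ≥0∞)⁻¹ ^ n) / n) * (closedBall (0:ℝ) r).indicator 1 (xnk n k)
      = (2 : ℝ≥0∞)⁻¹ ^ n := by
    have : ∀ k ∈ Finset.range n, (((2 : ℝ≥0∞)⁻¹ ^ n) / n) * (closedBall (0:ℝ) r).indicator 1 (xnk n k)
        = ((2 : ℝ≥0∞)⁻¹ ^ n) / n := by
      intro k hk
      have hmem : xnk n k ∈ closedBall (0:ℝ) r := by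
        rw [Real.closedBall_eq_Icc]
        constructor
        · have hr0 : (0:ℝ) < r := lt_of_lt_of_le (by positivity) hr
          simp; linarith [xnk_pos n k]
        · have := xnk_upper (le_of_lt (Finset.mem_range.mp hk))
          simp; linarith
      rw [Set.indicator_of_mem hmem]; simp
    rw [Finset.sum_congr rfl this, Finset.sum_const, Finset.card_range, nsmul_eq_mul,
      mul_comm, ENNReal.div_mul_cancel (by exact_mod_cast hn.trans_lt' (by norm_num) |>.ne' : (n:ℝ≥0∞) ≠ 0) (by simp)]
  calc (2 : ℝ≥0∞)⁻¹ ^ n = _ := key.symm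
    _ ≤ _ := ENNReal.le_tsum n

lemma lemB {m : ℕ} {R : ℝ} (hR : ∀ j < m, R < (2 : ℝ)⁻¹ ^ (2 ^ j)) :
    muLR (closedBall 0 R) ≤ (2 : ℝ≥0∞)⁻¹ ^ m * 2 := by
  rw [muLR_apply measurableSet_closedBall]
  have hle : ∀ j : ℕ, ∑ k ∈ Finset.range j, (((2 : ℝ≥0∞)⁻¹ ^ j) / j) * (closedBall (0:ℝ) R).indicator 1 (xnk j k)
      ≤ (fun j => if j < m then 0 else (2 : ℝ≥0∞)⁻¹ ^ j) j := by
    intro j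
    by_cases hj : j < m
    · simp only [hj, if_true]
      have : ∀ k ∈ Finset.range j, (((2 : ℝ≥0∞)⁻¹ ^ j) / j) * (closedBall (0:ℝ) R).indicator 1 (xnk j k) = 0 := by
        intro k _
        have hnot : xnk j k ∉ closedBall (0:ℝ) R := by
          rw [Real.closedBall_eq_Icc]
          intro hmem
          have := hmem.2
          have h1 := xnk_lower j k
          have h2 := hR j hj
          simp at this
          linarith
        rw [Set.indicator_of_notMem hnot]; simp
      rw [Finset.sum_congr rfl this]; simp
    · simp only [hj, if_false]
      exact term_le j
  calc _ ≤ ∑' j : ℕ, (fun j => if j < m then 0 else (2 : ℝ≥0∞)⁻¹ ^ j) j := ENNReal.tsum_le_tsum hle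
    _ = ∑' j : ℕ, (2 : ℝ≥0∞)⁻¹ ^ (j + m) := by
        rw [← Summable.sum_add_tsum_nat_add' (f := fun j => if j < m then 0 else (2:ℝ≥0∞)⁻¹ ^ j)
          (k := m) ENNReal.summable]
        have h1 : ∀ j ∈ Finset.range m, (if j < m then 0 else (2:ℝ≥0∞)⁻¹^j) = 0 :=
          fun j hj => by simp [Finset.mem_range.mp hj]
        rw [Finset.sum_congr rfl h1]
        have h2 : ∀ j:ℕ, (if j + m < m then 0 else (2:ℝ≥0∞)⁻¹^(j+m)) = (2:ℝ≥0∞)⁻¹^(j+m) :=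
          fun j => by simp
        rw [tsum_congr h2]
        simp
    _ = (2 : ℝ≥0∞)⁻¹ ^ m * 2 := by
        rw [tsum_congr (fun j => pow_add (2 : ℝ≥0∞)⁻¹ j m)]
        rw [ENNReal.tsum_mul_right, ENNReal.tsum_geometric, ENNReal.one_sub_inv_two]
        simp [mul_comm]

lemma exists_n {r : ℝ} (hr : 0 < r) : ∃ n : ℕ, 1 ≤ n ∧ 2 * (2 : ℝ)⁻¹ ^ (2 ^ n) ≤ r := by
  obtain ⟨N, hN⟩ := exists_pow_lt_of_lt_one (x := r / 2) (y := (2:ℝ)⁻¹) (by positivity) (by norm_num)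
  refine ⟨N + 1, le_add_self, ?_⟩
  have h1 : ((2:ℝ)⁻¹) ^ (2 ^ (N+1)) ≤ (2:ℝ)⁻¹ ^ N := by
    apply pow_le_pow_of_le_one (by norm_num) (by norm_num)
    calc N ≤ 2 ^ N := (Nat.lt_two_pow_self (n := N)).le
      _ ≤ 2 ^ (N+1) := Nat.pow_le_pow_right (by norm_num) (Nat.le_succ N)
  nlinarith [pow_pos (show (0:ℝ) < 2⁻¹ by norm_num) N]

lemma ofReal_half_pow (n : ℕ) : ENNReal.ofReal ((2:ℝ)⁻¹ ^ n) = (2 : ℝ≥0∞)⁻¹ ^ n := by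
  rw [ENNReal.ofReal_pow (by norm_num), ENNReal.ofReal_inv_of_pos (by norm_num)]
  norm_num

lemma atom_lower {n k : ℕ} (hn : 1 ≤ n) (hk : k < n) {r : ℝ} (hr : 0 < r) :
    ((2 : ℝ≥0∞)⁻¹ ^ n) / n ≤ muLR (closedBall (xnk n k) r) := by
  rw [muLR_apply measurableSet_closedBall]
  have h1 : ((2 : ℝ≥0∞)⁻¹ ^ n) / n
      ≤ ∑ j ∈ Finset.range n, (((2 : ℝ≥0∞)⁻¹ ^ n) / n) * (closedBall (xnk n k) r).indicator 1 (xnk n j) := by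
    have hmem : xnk n k ∈ closedBall (xnk n k) r := mem_closedBall_self hr.le
    calc ((2 : ℝ≥0∞)⁻¹ ^ n) / n
        = (((2 : ℝ≥0∞)⁻¹ ^ n) / n) * (closedBall (xnk n k) r).indicator 1 (xnk n k) := by
          rw [Set.indicator_of_mem hmem]; simp
      _ ≤ _ := Finset.single_le_sum (f := fun j => (((2 : ℝ≥0∞)⁻¹ ^ n) / n) * (closedBall (xnk n k) r).indicator 1 (xnk n j))
          (fun _ _ => zero_le) (Finset.mem_range.mpr hk)
  exact h1.trans (ENNReal.le_tsum n)

lemma exists_C_atom {n k : ℕ} (hn : 1 ≤ n) (hk : k < n) {s : ℝ} (hs : 0 < s) :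
    ∃ C : ℝ, 0 < C ∧ ∀ r R : ℝ, 0 < r → r < R →
      muLR (closedBall (xnk n k) R) ≤ ENNReal.ofReal (C * (R / r) ^ s) * muLR (closedBall (xnk n k) r) := by
  refine ⟨2 * 2 ^ n * n, by positivity, fun r R hr hrR => ?_⟩
  have hR : 0 < R := hr.trans hrR
  have hrp : 1 ≤ (R / r) ^ s := Real.one_le_rpow ((one_le_div hr).2 hrR.le) hs.le
  have hC : ENNReal.ofReal (2 * 2 ^ n * (n:ℝ)) ≤ ENNReal.ofReal (2 * 2 ^ n * n * (R / r) ^ s) := by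
    apply ENNReal.ofReal_le_ofReal
    have hX : (0:ℝ) ≤ 2 * 2 ^ n * (n:ℝ) := by positivity
    nlinarith [mul_le_mul_of_nonneg_left hrp hX]
  have hCval : ENNReal.ofReal (2 * 2 ^ n * (n:ℝ)) = 2 * 2 ^ n * (n : ℝ≥0∞) := by
    rw [ENNReal.ofReal_mul (by positivity), ENNReal.ofReal_mul (by norm_num),
      ENNReal.ofReal_pow (by norm_num), ENNReal.ofReal_natCast]
    norm_num
  have hne : (n : ℝ≥0∞) ≠ 0 := Nat.cast_ne_zero.mpr (by omega)
  have hcancel : (2 : ℝ≥0∞) * 2 ^ n * n * (((2 : ℝ≥0∞)⁻¹ ^ n) / n) = 2 := by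
    rw [← ENNReal.inv_pow, div_eq_mul_inv]
    calc (2 : ℝ≥0∞) * 2 ^ n * n * (((2:ℝ≥0∞) ^ n)⁻¹ * (n:ℝ≥0∞)⁻¹)
        = 2 * ((2:ℝ≥0∞) ^ n * ((2:ℝ≥0∞) ^ n)⁻¹) * ((n:ℝ≥0∞) * (n:ℝ≥0∞)⁻¹) := by ring
      _ = 2 := by
          rw [ENNReal.mul_inv_cancel (by positivity) (by simp),
            ENNReal.mul_inv_cancel hne (by simp)]
          ring
  calc muLR (closedBall (xnk n k) R) ≤ 2 := muLR_le_two measurableSet_closedBall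
    _ = ENNReal.ofReal (2 * 2 ^ n * (n:ℝ)) * (((2 : ℝ≥0∞)⁻¹ ^ n) / n) := by rw [hCval, hcancel]
    _ ≤ ENNReal.ofReal (2 * 2 ^ n * n * (R / r) ^ s) * muLR (closedBall (xnk n k) r) :=
        mul_le_mul' hC (atom_lower hn hk hr)

lemma Dprop {s : ℝ} (hs : 0 < s) :
    ∃ D : ℕ, 3 ≤ D ∧ ∀ d : ℕ, D + 1 ≤ d → (d:ℝ) + 1 ≤ s * ((2:ℝ)^(d-1) - 2) := by
  obtain ⟨K, hK⟩ := pow_unbounded_of_one_lt (y := (2:ℝ)) (8 / s) one_lt_two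
  have hA : (8:ℝ) < s * 2 ^ K := by
    rw [div_lt_iff₀ hs] at hK; linarith
  refine ⟨2 * K + 3, by omega, fun d hd => ?_⟩
  set e2 := d - 2 - K with he2
  have hd2 : d - 2 = K + e2 := by omega
  have hd1 : d - 1 = (d - 2) + 1 := by omega
  have hKe2 : K ≤ e2 := by omega
  have hde : d = e2 + K + 2 := by omega
  have hB : (e2:ℝ) + 1 ≤ 2 ^ e2 := by exact_mod_cast Nat.lt_two_pow_self (n := e2)
  have h2 : (2:ℝ) ≤ 2 ^ (d - 2) := by
    calc (2:ℝ) = 2 ^ 1 := (pow_one 2).symm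
      _ ≤ 2 ^ (d - 2) := pow_le_pow_right₀ one_le_two (by omega)
  have hC : s * 2 ^ (d-2) ≤ s * ((2:ℝ)^(d-1) - 2) := by
    rw [hd1, pow_succ]
    nlinarith
  have hD : s * (2:ℝ) ^ (d-2) = (s * 2 ^ K) * 2 ^ e2 := by rw [hd2, pow_add]; ring
  have hE : (8:ℝ) * 2 ^ e2 ≤ (s * 2 ^ K) * 2 ^ e2 := by
    have := pow_pos (show (0:ℝ) < 2 by norm_num) e2
    nlinarith
  have hG : (d:ℝ) + 1 ≤ 8 * ((e2:ℝ) + 1) := by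
    have hc : (K:ℝ) ≤ (e2:ℝ) := by exact_mod_cast hKe2
    have hdc : (d:ℝ) = (e2:ℝ) + (K:ℝ) + 2 := by exact_mod_cast hde
    linarith
  calc (d:ℝ) + 1 ≤ 8 * ((e2:ℝ) + 1) := hG
    _ ≤ 8 * 2 ^ e2 := by linarith
    _ ≤ (s * 2 ^ K) * 2 ^ e2 := hE
    _ = s * 2 ^ (d-2) := hD.symm
    _ ≤ s * ((2:ℝ)^(d-1) - 2) := hC

lemma pow_cancel {m n : ℕ} (h : m ≤ n) :
    ENNReal.ofReal ((2:ℝ) ^ (n - m + 1)) * (2 : ℝ≥0∞)⁻¹ ^ n = (2 : ℝ≥0∞)⁻¹ ^ m * 2 := by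
  have hC : ENNReal.ofReal ((2:ℝ) ^ (n - m + 1)) = (2:ℝ≥0∞) ^ (n - m + 1) := by
    rw [ENNReal.ofReal_pow (by norm_num)]; norm_num
  rw [hC]
  obtain ⟨j, rfl⟩ := Nat.exists_eq_add_of_le h
  have hj : m + j - m + 1 = j + 1 := by omega
  rw [hj]
  have h1 : (2:ℝ≥0∞) ^ j * (2:ℝ≥0∞)⁻¹ ^ j = 1 := by
    rw [← mul_pow, ENNReal.mul_inv_cancel (by norm_num) (by norm_num), one_pow]
  calc (2:ℝ≥0∞) ^ (j+1) * (2:ℝ≥0∞)⁻¹ ^ (m+j)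
      = (2:ℝ≥0∞)⁻¹ ^ m * ((2:ℝ≥0∞) ^ j * (2:ℝ≥0∞)⁻¹ ^ j) * 2 := by
        rw [pow_add (2:ℝ≥0∞)⁻¹ m j]; ring
    _ = (2:ℝ≥0∞)⁻¹ ^ m * 2 := by rw [h1]; ring

set_option maxHeartbeats 2000000 in
lemma exists_C_zero {s : ℝ} (hs : 0 < s) :
    ∃ C : ℝ, 0 < C ∧ ∀ r R : ℝ, 0 < r → r < R →
      muLR (closedBall 0 R) ≤ ENNReal.ofReal (C * (R / r) ^ s) * muLR (closedBall 0 r) := by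
  obtain ⟨D, hD3, hDp⟩ := Dprop hs
  refine ⟨2 ^ (D + 1), by positivity, fun r R hr hrR => ?_⟩
  have hR : 0 < R := hr.trans hrR
  have hrp1 : 1 ≤ (R / r) ^ s := Real.one_le_rpow ((one_le_div hr).2 hrR.le) hs.le
  have hex : ∃ n : ℕ, 1 ≤ n ∧ 2 * (2 : ℝ)⁻¹ ^ (2 ^ n) ≤ r := exists_n hr
  set n := Nat.find hex with hn_def
  obtain ⟨hn1, hnr⟩ := Nat.find_spec hex
  rw [← hn_def] at hn1 hnr
  have hexm : ∃ m : ℕ, (2 : ℝ)⁻¹ ^ (2 ^ m) ≤ R := by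
    refine ⟨n, ?_⟩
    have : (0:ℝ) < (2:ℝ)⁻¹ ^ (2 ^ n) := by positivity
    linarith
  set m := Nat.find hexm with hm_def
  have hm := Nat.find_spec hexm
  rw [← hm_def] at hm
  have hmn : m ≤ n := by
    apply Nat.find_le
    have : (0:ℝ) < (2:ℝ)⁻¹ ^ (2 ^ n) := by positivity
    linarith
  have hBr : (2 : ℝ≥0∞)⁻¹ ^ n ≤ muLR (closedBall 0 r) := lemA hn1 hnr
  have hBR : muLR (closedBall 0 R) ≤ (2 : ℝ≥0∞)⁻¹ ^ m * 2 := by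
    apply lemB
    intro j hj
    have := Nat.find_min hexm hj
    linarith [not_le.mp this]
  -- key real inequality
  have key : (2:ℝ) ^ (n - m + 1) ≤ 2 ^ (D + 1) * (R / r) ^ s := by
    by_cases hcase : n ≤ m + D
    · have h1 : (2:ℝ) ^ (n - m + 1) ≤ 2 ^ (D + 1) := by
        apply pow_le_pow_right₀ one_le_two; omega
      nlinarith [pow_pos (show (0:ℝ) < 2 by norm_num) (D+1)]
    · push_neg at hcase
      set d := n - m with hd_def
      have hdD : D + 1 ≤ d := by omega
      have hn2 : 2 ≤ n := by omega
      -- minimality of n gives r < 2 * (2⁻¹)^(2^(n-1))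
      have hrlt : r < 2 * (2:ℝ)⁻¹ ^ (2 ^ (n - 1)) := by
        have hmin := Nat.find_min hex (show n - 1 < n by omega)
        push_neg at hmin
        exact hmin (by omega)
      -- e
      set e := 2 ^ (n-1) - 2 ^ m - 1 with he_def
      have hpow_split : 2 ^ (n-1) = 2 ^ m * 2 ^ (d - 1) := by
        rw [← pow_add]; congr 1; omega
      have h2d : 1 ≤ 2 ^ (d-1) := Nat.one_le_two_pow
      have h2m : 1 ≤ 2 ^ m := Nat.one_le_two_pow
      have h2d4 : 4 ≤ 2 ^ (d-1) := by
        calc 4 = 2^2 := rfl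
          _ ≤ 2 ^ (d-1) := Nat.pow_le_pow_right (by norm_num) (by omega)
      have he_big : 2 ^ m * 2 ^ (d-1) ≥ 2 ^ m + 2 := by nlinarith
      have hge : 2 ^ m + 2 ≤ 2 ^ (n-1) := by rw [hpow_split]; exact he_big
      have he : 2 ^ m + 1 + e = 2 ^ (n-1) := by rw [he_def]; omega
      have hab : 2 ^ m + 2 ^ (d-1) ≤ 2 ^ m * 2 ^ (d-1) + 1 := by nlinarith
      have he_lb : 2 ^ (d-1) ≤ e + 2 := by
        rw [he_def, hpow_split]; omega
      -- R/r ≥ 2^e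
      have hid : (2:ℝ) ^ e * (2 * (2:ℝ)⁻¹ ^ (2 ^ (n-1))) = (2:ℝ)⁻¹ ^ (2 ^ m) := by
        rw [← he, pow_add, pow_add, inv_pow, inv_pow, inv_pow]
        have h2e : (0:ℝ) < (2:ℝ) ^ e := by positivity
        have h2m' : (0:ℝ) < (2:ℝ) ^ (2^m) := by positivity
        field_simp
      have hRr : (2:ℝ) ^ e ≤ R / r := by
        rw [le_div_iff₀ hr]
        have h2e : (0:ℝ) < (2:ℝ) ^ e := by positivity
        calc (2:ℝ) ^ e * r ≤ 2 ^ e * (2 * (2:ℝ)⁻¹ ^ (2 ^ (n-1))) := by nlinarith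
          _ = (2:ℝ)⁻¹ ^ (2 ^ m) := hid
          _ ≤ R := hm
      -- exponent inequality
      have hes : ((n - m + 1 : ℕ) : ℝ) ≤ (e:ℝ) * s := by
        have h1 : (d:ℝ) + 1 ≤ s * ((2:ℝ)^(d-1) - 2) := hDp d hdD
        have h2 : ((2:ℕ) ^ (d-1) : ℝ) ≤ (e:ℝ) + 2 := by exact_mod_cast he_lb
        have h3 : ((2:ℝ))^(d-1) - 2 ≤ (e:ℝ) := by push_cast at h2 ⊢; linarith
        have h4 : s * ((2:ℝ)^(d-1) - 2) ≤ s * e := by nlinarith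
        have h5 : ((n - m + 1 : ℕ) : ℝ) = (d:ℝ) + 1 := by rw [hd_def]; push_cast [hd_def]; ring
        linarith [h1, h4, h5.le]
      have hrpow : (2:ℝ) ^ (n - m + 1) ≤ (R / r) ^ s := by
        have hstep1 : ((2:ℝ) ^ e) ^ s ≤ (R / r) ^ s :=
          Real.rpow_le_rpow (by positivity) hRr hs.le
        have hstep2 : (2:ℝ) ^ (n - m + 1) ≤ ((2:ℝ) ^ e) ^ s := by
          rw [← Real.rpow_natCast 2 e, ← Real.rpow_mul (by norm_num), ← Real.rpow_natCast 2 (n - m + 1)]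
          exact (Real.rpow_le_rpow_left_iff one_lt_two).mpr hes
        linarith
      have h2D : (1:ℝ) ≤ 2 ^ (D + 1) := one_le_pow₀ one_le_two
      have hpos : (0:ℝ) < (R / r) ^ s := lt_of_lt_of_le zero_lt_one hrp1
      calc (2:ℝ) ^ (n - m + 1) ≤ (R / r) ^ s := hrpow
        _ = 1 * (R / r) ^ s := (one_mul _).symm
        _ ≤ 2 ^ (D + 1) * (R / r) ^ s := mul_le_mul_of_nonneg_right h2D hpos.le
  calc muLR (closedBall 0 R) ≤ (2 : ℝ≥0∞)⁻¹ ^ m * 2 := hBR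
    _ = ENNReal.ofReal ((2:ℝ) ^ (n - m + 1)) * (2 : ℝ≥0∞)⁻¹ ^ n := (pow_cancel hmn).symm
    _ ≤ ENNReal.ofReal (2 ^ (D + 1) * (R / r) ^ s) * muLR (closedBall 0 r) :=
        mul_le_mul' (ENNReal.ofReal_le_ofReal key) hBr

lemma XLR_countable : XLR.Countable := by
  have hsub : XLR ⊆ {0} ∪ Set.range (fun p : ℕ × ℕ => xnk p.1 p.2) := by
    rintro y (h | ⟨n, _, k, _, rfl⟩)
    · exact Or.inl h
    · exact Or.inr ⟨(n, k), rfl⟩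
  exact Set.Countable.mono hsub ((Set.countable_singleton 0).union (Set.countable_range _))

lemma muLR_compl : muLR XLRᶜ = 0 := by
  rw [muLR_apply XLR_countable.measurableSet.compl]
  have h : ∀ n : ℕ, ∀ k ∈ Finset.range n,
      (((2 : ℝ≥0∞)⁻¹ ^ n) / n) * (XLRᶜ).indicator 1 (xnk n k) = 0 := by
    intro n k hk
    have hmem : xnk n k ∈ XLR := Or.inr ⟨n, by have := Finset.mem_range.mp hk; omega, k, Finset.mem_range.mp hk, rfl⟩
    rw [Set.indicator_of_notMem (by simpa using hmem)]
    simp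
  calc (∑' n : ℕ, ∑ k ∈ Finset.range n, (((2 : ℝ≥0∞)⁻¹ ^ n) / n) * (XLRᶜ).indicator 1 (xnk n k))
      = ∑' n : ℕ, (0:ℝ≥0∞) := by
        refine tsum_congr fun n => ?_
        rw [Finset.sum_congr rfl (h n)]; simp
    _ = 0 := by simp

/-- `μ` is a finite Borel measure fully supported on `X`, and its pointwise
Assouad dimension is `0` at every point of `X`. -/
theorem muLR_pwAssouadDim_eq_zero :
    IsFiniteMeasure muLR ∧
    (∀ x ∈ XLR, ∀ r : ℝ, 0 < r → 0 < muLR (closedBall x r)) ∧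
    muLR XLRᶜ = 0 ∧
    (∀ x ∈ XLR, pwAssouadDim muLR x = 0) := by
  refine ⟨⟨(muLR_le_two MeasurableSet.univ).trans_lt (by norm_num)⟩, ?_, muLR_compl, ?_⟩
  · rintro x (hx | ⟨n, hn1, k, hk, rfl⟩) r hr
    · rw [Set.mem_singleton_iff] at hx
      subst hx
      obtain ⟨n, hn1, hnr⟩ := exists_n hr
      exact lt_of_lt_of_le (ENNReal.pow_pos (ENNReal.inv_pos.mpr (by norm_num)) n) (lemA hn1 hnr)
    · refine lt_of_lt_of_le ?_ (atom_lower hn1 hk hr)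
      exact ENNReal.div_pos (pow_ne_zero n (by simp)) (by simp)
  · intro x hx
    refine le_antisymm ?_ zero_le
    refine ENNReal.le_of_forall_pos_le_add fun ε hε _ => ?_
    rw [zero_add]
    have hs : (0:ℝ) < (ε:ℝ) := by exact_mod_cast hε
    have hC : ∃ C : ℝ, 0 < C ∧ ∀ r R : ℝ, 0 < r → r < R →
        muLR (closedBall x R) ≤ ENNReal.ofReal (C * (R / r) ^ (ε:ℝ)) * muLR (closedBall x r) := by
      rcases hx with hx | ⟨n, hn1, k, hk, rfl⟩
      · rw [Set.mem_singleton_iff] at hx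
        subst hx
        exact exists_C_zero hs
      · exact exists_C_atom hn1 hk hs
    have hle : pwAssouadDim muLR x ≤ ENNReal.ofReal (ε:ℝ) :=
      sInf_le ⟨(ε:ℝ), ⟨hs, hC⟩, rfl⟩
    rwa [ENNReal.ofReal_coe_nnreal] at hle
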